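/- Let p be a prime with 2^(n-1) ≤ p < 2^n for some n ≥ 2, and let x be an integer with 1 ≤ x < p. Run the Extended Euclidean Algorithm on (p, x) and let N = 4·Σ_{i=1}^{k-1}(⌊log₂ q_i⌋ + 1). Then N ≥ 4n. -/
import Mathlib


/-- Remainder sequence of the Extended Euclidean Algorithm on `(p, x)`:
`r 0 = p`, `r 1 = x`, and `r (i+1) = r (i-1) - ⌊r (i-1) / r i⌋ * r i` for `i ≥ 1`. -/
def eeaR (p x : ℕ) : ℕ → ℕ
  | 0 => p
  | 1 => x
  | (i + 2) => eeaR p x i - (eeaR p x i / eeaR p x (i + 1)) * eeaR p x (i + 1)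

/-- Quotient sequence `q i = ⌊r (i-1) / r i⌋` of the Extended Euclidean Algorithm. -/
def eeaQ (p x i : ℕ) : ℕ := eeaR p x (i - 1) / eeaR p x i

/-- Cofactor sequence of the Extended Euclidean Algorithm:
`t 0 = 0`, `t 1 = 1`, and `t (i+1) = t (i-1) + q i * t i` for `i ≥ 1`. -/
def eeaT (p x : ℕ) : ℕ → ℕ
  | 0 => 0
  | 1 => 1
  | (i + 2) => eeaT p x i + eeaQ p x (i + 1) * eeaT p x (i + 1)

lemma eeaR_succ_mod (p x t : ℕ) : eeaR p x (t+2) = eeaR p x t % eeaR p x (t+1) := by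
  have h := Nat.div_add_mod (eeaR p x t) (eeaR p x (t+1))
  rw [eeaR, Nat.mul_comm]
  omega

lemma eeaR_gcd (p x : ℕ) : ∀ i, Nat.gcd (eeaR p x (i+1)) (eeaR p x i) = Nat.gcd x p := by
  intro i
  induction i with
  | zero => rfl
  | succ t ih => rw [eeaR_succ_mod, ← Nat.gcd_rec, ih]

/-- For a prime `p` with `2^(n-1) ≤ p < 2^n` (`n ≥ 2`) and `1 ≤ x < p`,
the step count `N = 4·Σ_{i=1}^{k-1}(⌊log₂ q_i⌋ + 1)` satisfies `N ≥ 4n`. -/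
theorem stmt_1 (n p x : ℕ) (hn : 2 ≤ n) (hp : p.Prime)
    (hplb : 2 ^ (n - 1) ≤ p) (hpub : p < 2 ^ n)
    (hx : 1 ≤ x) (hxp : x < p)
    (k : ℕ) (hk : eeaR p x k = 0) (hkmin : ∀ m < k, eeaR p x m ≠ 0)
    (N : ℕ) (hN : N = 4 * ∑ i ∈ Finset.Icc 1 (k - 1), (Nat.log 2 (eeaQ p x i) + 1)) :
    4 * n ≤ N := by
  have hr0 : eeaR p x 0 = p := rfl
  have hr1 : eeaR p x 1 = x := rfl
  -- k ≥ 2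
  have hk2 : 2 ≤ k := by
    rcases k with _ | _ | k
    · rw [hr0] at hk; omega
    · rw [hr1] at hk; omega
    · omega
  -- positivity below k
  have hpos : ∀ m < k, 0 < eeaR p x m := fun m hm => Nat.pos_of_ne_zero (hkmin m hm)
  -- coprimality
  have hcop : Nat.gcd x p = 1 := by
    have : ¬ p ∣ x := fun h => absurd (Nat.le_of_dvd (by omega) h) (by omega)
    exact Nat.Coprime.gcd_eq_one (Nat.coprime_comm.mp (hp.coprime_iff_not_dvd.mpr this))
  -- r (k-1) = 1
  have hrk1 : eeaR p x (k - 1) = 1 := by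
    have h := eeaR_gcd p x (k - 1)
    have hkk : k - 1 + 1 = k := by omega
    rw [hkk, hk, Nat.gcd_zero_left, hcop] at h
    exact h
  -- step inequality: for 1 ≤ m ≤ k-1, r (m-1) < (q m + 1) * r m
  have hstep : ∀ m, 1 ≤ m → m ≤ k - 1 →
      eeaR p x (m - 1) < (eeaQ p x m + 1) * eeaR p x m := by
    intro m hm1 hm2
    obtain ⟨t, rfl⟩ : ∃ t, m = t + 1 := ⟨m - 1, by omega⟩
    have hq : eeaQ p x (t + 1) = eeaR p x t / eeaR p x (t + 1) := rfl
    have hd := Nat.div_add_mod (eeaR p x t) (eeaR p x (t + 1))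
    have hmodlt : eeaR p x t % eeaR p x (t + 1) < eeaR p x (t + 1) :=
      Nat.mod_lt _ (hpos (t + 1) (by omega))
    have : eeaR p x t < eeaR p x (t + 1) * (eeaR p x t / eeaR p x (t + 1)) + eeaR p x (t + 1) := by
      omega
    calc eeaR p x (t + 1 - 1) = eeaR p x t := by norm_num
      _ < eeaR p x (t + 1) * (eeaR p x t / eeaR p x (t + 1)) + eeaR p x (t + 1) := this
      _ = (eeaQ p x (t + 1) + 1) * eeaR p x (t + 1) := by rw [hq]; ring
  -- power bound on q
  have hqpow : ∀ m, eeaQ p x m + 1 ≤ 2 ^ (Nat.log 2 (eeaQ p x m) + 1) :=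
    fun m => Nat.lt_pow_succ_log_self (by norm_num) _
  -- main downward induction
  have key : ∀ j, 1 ≤ j → j ≤ k - 1 →
      eeaR p x (k - 1 - j) <
        ∏ i ∈ Finset.Icc (k - j) (k - 1), 2 ^ (Nat.log 2 (eeaQ p x i) + 1) := by
    intro j hj1
    induction j, hj1 using Nat.le_induction with
    | base =>
      intro hjk
      have h1 : eeaR p x (k - 1 - 1) < (eeaQ p x (k - 1) + 1) * eeaR p x (k - 1) :=
        hstep (k - 1) (by omega) le_rfl
      rw [hrk1, Nat.mul_one] at h1
      rw [show k - 1 = k - 1 from rfl, Finset.Icc_self, Finset.prod_singleton]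
      exact lt_of_lt_of_le h1 (hqpow _)
    | succ j hj ih =>
      intro hjk
      set m := k - 1 - j with hm
      have hm1 : 1 ≤ m := by omega
      have hmk : m ≤ k - 1 := by omega
      have h1 : eeaR p x (m - 1) < (eeaQ p x m + 1) * eeaR p x m := hstep m hm1 hmk
      have h2 : eeaR p x m < ∏ i ∈ Finset.Icc (k - j) (k - 1), 2 ^ (Nat.log 2 (eeaQ p x i) + 1) :=
        ih (by omega)
      have hins : Finset.Icc m (k - 1) = insert m (Finset.Icc (m + 1) (k - 1)) := by
        ext a
        simp only [Finset.mem_Icc, Finset.mem_insert]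
        omega
      have hkj : k - (j + 1) = m := by omega
      have hkj' : k - j = m + 1 := by omega
      rw [show k - 1 - (j + 1) = m - 1 from by omega, hkj, hins,
        Finset.prod_insert (by simp), ← hkj']
      have h3 : (eeaQ p x m + 1) * eeaR p x m ≤
          2 ^ (Nat.log 2 (eeaQ p x m) + 1) * eeaR p x m :=
        Nat.mul_le_mul_right _ (hqpow m)
      have h4 : 2 ^ (Nat.log 2 (eeaQ p x m) + 1) * eeaR p x m ≤
          2 ^ (Nat.log 2 (eeaQ p x m) + 1) *
            ∏ i ∈ Finset.Icc (k - j) (k - 1), 2 ^ (Nat.log 2 (eeaQ p x i) + 1) := by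
        rw [hkj']
        exact Nat.mul_le_mul_left _ (by rw [← hkj']; omega)
      calc eeaR p x (m - 1) < (eeaQ p x m + 1) * eeaR p x m := h1
        _ ≤ 2 ^ (Nat.log 2 (eeaQ p x m) + 1) * eeaR p x m := h3
        _ ≤ _ := h4
  -- conclude
  have hmain := key (k - 1) (by omega) le_rfl
  rw [show k - 1 - (k - 1) = 0 from by omega, show k - (k - 1) = 1 from by omega, hr0] at hmain
  rw [Finset.prod_pow_eq_pow_sum] at hmain
  have hS : n ≤ ∑ i ∈ Finset.Icc 1 (k - 1), (Nat.log 2 (eeaQ p x i) + 1) := by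
    by_contra hc
    push_neg at hc
    have : (2:ℕ) ^ (∑ i ∈ Finset.Icc 1 (k - 1), (Nat.log 2 (eeaQ p x i) + 1)) ≤ 2 ^ (n - 1) :=
      Nat.pow_le_pow_right (by norm_num) (by omega)
    omega
  omega
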